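/- Let E be a nonzero object of 𝒜 with v(cl E) = 1, let c ∈ ℝ, assume the set {cl F : F a subobject of E} ⊆ Γ is finite, and assume every nonzero object of 𝒜 admits a c′-HN filtration for every c′ ∈ ℝ. Then the following are equivalent: (1) E is c-semistable; (2) there exists a subobject E′ of E with E′ ≠ E and v(cl E′) = 0 such that, for all sufficiently small ε > 0, the chain 0 ⊆ E′ ⊆ E is the (c−ε)-HN filtration of E (that is: either E′ = 0 and E is (c−ε)-semistable, or E′ ≠ 0, both E′ and E/E′ are (c−ε)-semistable, and μ_{c−ε}(E′) > μ_{c−ε}(E/E′)), and moreover if E′ ≠ 0 then E′ and E have equal c-slopes (both μ_c(E′) ≤ μ_c(E) and μ_c(E) ≤ μ_c(E′) hold). -/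

import Mathlib

open CategoryTheory CategoryTheory.Limits

/-- Cross-multiplied comparison `μ_c(x) ≤ μ_c(y)` of the slopes `μ_c = (d + c·v)/r`. -/
def slopeLE {Γ : Type*} [AddCommGroup Γ] (d r : Γ →+ ℝ) (v : Γ →+ ℤ) (c : ℝ)
    (x y : Γ) : Prop :=
  (d x + c * (v x : ℝ)) * r y ≤ (d y + c * (v y : ℝ)) * r x

/-- Cross-multiplied comparison `μ_c(x) < μ_c(y)` of the slopes `μ_c = (d + c·v)/r`. -/
def slopeLT {Γ : Type*} [AddCommGroup Γ] (d r : Γ →+ ℝ) (v : Γ →+ ℤ) (c : ℝ)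
    (x y : Γ) : Prop :=
  (d x + c * (v x : ℝ)) * r y < (d y + c * (v y : ℝ)) * r x

/-- A nonzero object `E` is `c`-semistable if `μ_c(F) ≤ μ_c(E)` for every subobject
`F ⊆ E` with `F ≠ 0`, `F ≠ E`. -/
def IsSemistableAt {C : Type*} [Category C] [Abelian C] {Γ : Type*} [AddCommGroup Γ]
    (cl : C → Γ) (d r : Γ →+ ℝ) (v : Γ →+ ℤ) (c : ℝ) (E : C) : Prop :=
  ∀ (F : C) (f : F ⟶ E), Mono f → ¬ IsZero F → ¬ IsIso f →
    slopeLE d r v c (cl F) (cl E)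

/-- A nonzero object `E` is `c`-stable if `μ_c(F) < μ_c(E)` for every subobject
`F ⊆ E` with `F ≠ 0`, `F ≠ E`. -/
def IsStableAt {C : Type*} [Category C] [Abelian C] {Γ : Type*} [AddCommGroup Γ]
    (cl : C → Γ) (d r : Γ →+ ℝ) (v : Γ →+ ℤ) (c : ℝ) (E : C) : Prop :=
  ∀ (F : C) (f : F ⟶ E), Mono f → ¬ IsZero F → ¬ IsIso f →
    slopeLT d r v c (cl F) (cl E)

/-- `E` is `c⁺`-stable if it is `(c+ε)`-stable for all sufficiently small `ε > 0`. -/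
def IsPlusStableAt {C : Type*} [Category C] [Abelian C] {Γ : Type*} [AddCommGroup Γ]
    (cl : C → Γ) (d r : Γ →+ ℝ) (v : Γ →+ ℤ) (c : ℝ) (E : C) : Prop :=
  ∃ δ > (0 : ℝ), ∀ ε : ℝ, 0 < ε → ε < δ → IsStableAt cl d r v (c + ε) E

/-- `E` is `c⁻`-stable if it is `(c−ε)`-stable for all sufficiently small `ε > 0`. -/
def IsMinusStableAt {C : Type*} [Category C] [Abelian C] {Γ : Type*} [AddCommGroup Γ]
    (cl : C → Γ) (d r : Γ →+ ℝ) (v : Γ →+ ℤ) (c : ℝ) (E : C) : Prop :=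
  ∃ δ > (0 : ℝ), ∀ ε : ℝ, 0 < ε → ε < δ → IsStableAt cl d r v (c - ε) E

/-- A `c`-HN filtration of a nonzero object `X`: a chain of proper subobjects
`0 = X₀ ⊊ X₁ ⊊ ⋯ ⊊ Xₙ = X` whose successive quotients are `c`-semistable with strictly
decreasing `c`-slopes. -/
structure HNFiltration {C : Type*} [Category C] [Abelian C] {Γ : Type*} [AddCommGroup Γ]
    (cl : C → Γ) (d r : Γ →+ ℝ) (v : Γ →+ ℤ) (c : ℝ) (X : C) where
  n : ℕ
  npos : 0 < n
  obj : Fin (n + 1) → C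
  isZero_zero : IsZero (obj 0)
  last_eq : obj (Fin.last n) = X
  map : (i : Fin n) → (obj i.castSucc ⟶ obj i.succ)
  mono : ∀ i : Fin n, Mono (map i)
  not_iso : ∀ i : Fin n, ¬ IsIso (map i)
  quot_sst : ∀ i : Fin n, IsSemistableAt cl d r v c (cokernel (map i))
  slope_desc : ∀ (i : ℕ) (h : i + 1 < n),
    slopeLT d r v c (cl (cokernel (map ⟨i + 1, h⟩)))
      (cl (cokernel (map ⟨i, Nat.lt_of_succ_lt h⟩)))

open CategoryTheory CategoryTheory.Limits

namespace HNAux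
variable {Γ : Type*} [AddCommGroup Γ] (d r : Γ →+ ℝ) (v : Γ →+ ℤ)

def cross (c : ℝ) (x y : Γ) : ℝ :=
  (d x + c * (v x : ℝ)) * r y - (d y + c * (v y : ℝ)) * r x

lemma slopeLE_iff {c : ℝ} {x y : Γ} :
    slopeLE d r v c x y ↔ cross d r v c x y ≤ 0 := by
  simp only [slopeLE, cross, sub_nonpos]

lemma slopeLT_iff {c : ℝ} {x y : Γ} :
    slopeLT d r v c x y ↔ cross d r v c x y < 0 := by
  simp only [slopeLT, cross, sub_neg]

lemma cross_add_left (c : ℝ) (x x' y : Γ) :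
    cross d r v c (x + x') y = cross d r v c x y + cross d r v c x' y := by
  simp only [cross, map_add]; push_cast; ring

lemma cross_add_right (c : ℝ) (x y y' : Γ) :
    cross d r v c x (y + y') = cross d r v c x y + cross d r v c x y' := by
  simp only [cross, map_add]; push_cast; ring

lemma cross_zero_left (c : ℝ) (y : Γ) : cross d r v c 0 y = 0 := by simp [cross]

lemma cross_self' (c : ℝ) (x : Γ) : cross d r v c x x = 0 := by simp [cross]

lemma cross_neg' (c : ℝ) (x y : Γ) : cross d r v c x y = - cross d r v c y x := by
  simp only [cross]; ring

lemma cross_sub_eps (c ε : ℝ) (x y : Γ) :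
    cross d r v (c - ε) x y
      = cross d r v c x y - ε * ((v x : ℝ) * r y - (v y : ℝ) * r x) := by
  simp only [cross]; ring

def good (x : Γ) : Prop := 0 ≤ r x ∧ 0 ≤ v x ∧ (r x = 0 → 0 < d x ∧ v x = 0)

lemma good_add {x y : Γ} (hx : good d r v x) (hy : good d r v y) : good d r v (x + y) := by
  obtain ⟨hx1, hx2, hx3⟩ := hx; obtain ⟨hy1, hy2, hy3⟩ := hy
  refine ⟨by rw [map_add]; linarith, by rw [map_add]; omega, fun h => ?_⟩
  rw [map_add] at h
  have hrx : r x = 0 := by linarith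
  have hry : r y = 0 := by linarith
  obtain ⟨h1, h2⟩ := hx3 hrx; obtain ⟨h3, h4⟩ := hy3 hry
  rw [map_add, map_add]
  constructor
  · linarith
  · omega

lemma r_pos_of_lt {c : ℝ} {x y : Γ} (hx : good d r v x) (hry : 0 ≤ r y)
    (h : cross d r v c x y < 0) : 0 < r x := by
  rcases lt_or_eq_of_le hx.1 with h' | h'
  · exact h'
  · exfalso
    obtain ⟨hd, hv⟩ := hx.2.2 h'.symm
    simp only [cross, ← h', hv] at h
    push_cast at h
    nlinarith

lemma lt_trans' {c : ℝ} {x y z : Γ} (hx : good d r v x) (hy : good d r v y)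
    (hrz : 0 ≤ r z) (h1 : cross d r v c x y < 0) (h2 : cross d r v c y z < 0) :
    cross d r v c x z < 0 := by
  have hry : 0 < r y := r_pos_of_lt d r v hy hrz h2
  have hrx : 0 < r x := r_pos_of_lt d r v hx (le_of_lt hry) h1
  simp only [cross] at h1 h2 ⊢
  nlinarith

lemma le_lt_trans' {c : ℝ} {x y z : Γ} (hrx : 0 ≤ r x) (hry : 0 < r y) (hrz : 0 ≤ r z)
    (h1 : cross d r v c x y ≤ 0) (h2 : cross d r v c y z < 0) :
    cross d r v c x z ≤ 0 := by
  simp only [cross] at h1 h2 ⊢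
  nlinarith

lemma le_le_trans' {c : ℝ} {x y z : Γ} (hrx : 0 ≤ r x) (hry : 0 < r y) (hrz : 0 ≤ r z)
    (h1 : cross d r v c x y ≤ 0) (h2 : cross d r v c y z ≤ 0) :
    cross d r v c x z ≤ 0 := by
  simp only [cross] at h1 h2 ⊢
  nlinarith

lemma cross_eq_zero_trans {c : ℝ} {x y e : Γ} (hbE : 0 < r e)
    (h1 : cross d r v c x e = 0) (h2 : cross d r v c y e = 0) :
    cross d r v c x y = 0 := by
  simp only [cross] at h1 h2 ⊢
  have h3 : ((d x + c * (v x : ℝ)) * r y - (d y + c * (v y : ℝ)) * r x) * r e = 0 := by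
    linear_combination (r y) * h1 - (r x) * h2
  rcases mul_eq_zero.mp h3 with h | h
  · exact h
  · exact absurd h (ne_of_gt hbE)

lemma le_of_forall_eps {A B δ : ℝ} (hδ : 0 < δ)
    (h : ∀ ε : ℝ, 0 < ε → ε < δ → A - ε * B ≤ 0) : A ≤ 0 := by
  by_contra hA
  push_neg at hA
  rcases le_or_gt B 0 with hB | hB
  · have := h (δ/2) (by linarith) (by linarith)
    nlinarith
  · have hε : 0 < min (δ/2) (A/(2*B)) := lt_min (by linarith) (by positivity)
    have h0 := h _ hε (lt_of_le_of_lt (min_le_left _ _) (by linarith))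
    have h2 : (min (δ/2) (A/(2*B))) * B ≤ (A/(2*B)) * B :=
      mul_le_mul_of_nonneg_right (min_le_right _ _) (le_of_lt hB)
    have h3 : (A/(2*B)) * B = A/2 := by field_simp
    nlinarith

lemma sign_helper {A x : ℝ} (hA : A ≠ 0) (h : |x| < |A|) :
    ((A - x < 0 ↔ A < 0) ∧ (A - x ≤ 0 ↔ A < 0)) := by
  rcases lt_or_gt_of_ne hA with h' | h'
  · rw [abs_of_neg h', abs_lt] at h
    constructor <;> constructor <;> intro <;> linarith
  · rw [abs_of_pos h', abs_lt] at h
    constructor <;> constructor <;> intro <;> linarith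

lemma eps_consequences {A B ε ε' : ℝ} (hε : 0 < ε) (hε' : 0 < ε')
    (h : A ≠ 0 → |ε * B| < |A|) (h' : A ≠ 0 → |ε' * B| < |A|) :
    (A < 0 → A - ε*B < 0) ∧ (A - ε*B < 0 → A ≤ 0) ∧
    (A - ε*B ≤ 0 ↔ A - ε'*B ≤ 0) ∧ (A - ε*B < 0 ↔ A - ε'*B < 0) := by
  by_cases hA : A = 0
  · subst hA
    refine ⟨fun h0 => absurd h0 (lt_irrefl 0), fun _ => le_refl 0, ?_, ?_⟩
    · constructor <;> intro h0 <;> nlinarith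
    · constructor <;> intro h0 <;> nlinarith
  · obtain ⟨hlt, hle⟩ := sign_helper hA (h hA)
    obtain ⟨hlt', hle'⟩ := sign_helper hA (h' hA)
    exact ⟨fun h0 => hlt.mpr h0, fun h0 => le_of_lt (hlt.mp h0),
      hle.trans hle'.symm, hlt.trans hlt'.symm⟩

lemma exists_eps0 (T : Set Γ) (hT : T.Finite) (c : ℝ) :
    ∃ ε₀ : ℝ, 0 < ε₀ ∧ ∀ x ∈ T, ∀ y ∈ T, ∀ ε : ℝ, 0 < ε → ε < ε₀ →
      ((cross d r v c x y < 0 → cross d r v (c - ε) x y < 0) ∧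
       (cross d r v (c - ε) x y < 0 → cross d r v c x y ≤ 0) ∧
       (cross d r v (c - ε) x y ≤ 0 ↔ cross d r v (c - ε₀/2) x y ≤ 0) ∧
       (cross d r v (c - ε) x y < 0 ↔ cross d r v (c - ε₀/2) x y < 0)) := by
  classical
  set B : Γ → Γ → ℝ := fun x y => (v x : ℝ) * r y - (v y : ℝ) * r x with hB
  set g : Γ × Γ → ℝ := fun p =>
    if cross d r v c p.1 p.2 = 0 then 1
    else |cross d r v c p.1 p.2| / (|B p.1 p.2| + 1) with hg
  have hTT : (T ×ˢ T).Finite := hT.prod hT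
  set Fs : Finset ℝ := insert 1 (hTT.toFinset.image g) with hFs
  have hne : Fs.Nonempty := ⟨1, by simp [hFs]⟩
  set ε₀ : ℝ := Fs.min' hne with hε₀def
  have hposF : ∀ a ∈ Fs, 0 < a := by
    intro a ha
    simp only [hFs, Finset.mem_insert, Finset.mem_image] at ha
    rcases ha with rfl | ⟨p, _, rfl⟩
    · norm_num
    · simp only [hg]
      split
      · norm_num
      · exact div_pos (abs_pos.mpr (by assumption)) (by positivity)
  have hε₀pos : 0 < ε₀ := hposF _ (Fs.min'_mem hne)
  have key : ∀ x ∈ T, ∀ y ∈ T, ∀ ε : ℝ, 0 < ε → ε < ε₀ →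
      cross d r v c x y ≠ 0 → |ε * B x y| < |cross d r v c x y| := by
    intro x hx y hy ε hε1 hε2 hA
    have hmem : g (x, y) ∈ Fs := by
      simp only [hFs, Finset.mem_insert, Finset.mem_image]
      exact Or.inr ⟨(x, y), by simp [Set.Finite.mem_toFinset, hx, hy], rfl⟩
    have hle : ε₀ ≤ g (x, y) := Fs.min'_le _ hmem
    have hgxy : g (x, y) = |cross d r v c x y| / (|B x y| + 1) := by
      simp only [hg, if_neg hA]
    rw [hgxy] at hle
    have h2 : (0:ℝ) < |B x y| + 1 := by positivity
    rw [le_div_iff₀ h2] at hle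
    rw [abs_mul, abs_of_pos hε1]
    nlinarith [abs_nonneg (B x y)]
  refine ⟨ε₀, hε₀pos, fun x hx y hy ε hε1 hε2 => ?_⟩
  rw [cross_sub_eps d r v c ε, cross_sub_eps d r v c (ε₀/2)]
  exact eps_consequences hε1 (by linarith)
    (key x hx y hy ε hε1 hε2) (key x hx y hy (ε₀/2) (by linarith) (by linarith))

end HNAux

namespace HNAux
section Cat
variable {C : Type*} [Category C] [Abelian C] {Γ' : Type*} [AddCommGroup Γ']
variable (cl : C → Γ')

lemma cl_cokernel (hses : ∀ S : ShortComplex C, S.ShortExact → cl S.X₂ = cl S.X₁ + cl S.X₃)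
    {X Y : C} (f : X ⟶ Y) [Mono f] : cl Y = cl X + cl (cokernel f) :=
  hses (ShortComplex.mk f (cokernel.π f) (cokernel.condition f))
    { exact := ShortComplex.exact_of_g_is_cokernel _ (cokernelIsCokernel f) }

lemma cl_kernel_image (hses : ∀ S : ShortComplex C, S.ShortExact → cl S.X₂ = cl S.X₁ + cl S.X₃)
    {X Z : C} (φ : X ⟶ Z) : cl X = cl (kernel φ) + cl (image φ) := by
  have hzero : kernel.ι φ ≫ factorThruImage φ = 0 := by
    rw [← cancel_mono (image.ι φ)]
    simp [kernel.condition φ]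
  exact hses (ShortComplex.mk (kernel.ι φ) (factorThruImage φ) hzero)
    { exact := ShortComplex.exact_of_f_is_kernel _ (KernelFork.IsLimit.ofι _ _
        (fun g' hg => kernel.lift φ g' (by
          rw [← image.fac φ, ← Category.assoc, hg, zero_comp]))
        (fun g' hg => by simp)
        (fun g' hg m hm => by
          rw [← cancel_mono (kernel.ι φ)]
          simp [hm])) }

lemma isZero_cokernel_of_epi {X Y : C} (f : X ⟶ Y) [Epi f] : IsZero (cokernel f) :=
  IsZero.of_epi_eq_zero (cokernel.π f) (cokernel.π_of_epi f)

lemma cl_iso (hcl0 : ∀ X : C, IsZero X → cl X = 0)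
    (hses : ∀ S : ShortComplex C, S.ShortExact → cl S.X₂ = cl S.X₁ + cl S.X₃)
    {X Y : C} (e : X ≅ Y) : cl X = cl Y := by
  have h := cl_cokernel cl hses e.hom
  rw [hcl0 _ (isZero_cokernel_of_epi e.hom), add_zero] at h
  exact h.symm

lemma cl_image_of_epi (hcl0 : ∀ X : C, IsZero X → cl X = 0)
    (hses : ∀ S : ShortComplex C, S.ShortExact → cl S.X₂ = cl S.X₁ + cl S.X₃)
    {X Z : C} (φ : X ⟶ Z) [Epi φ] : cl (image φ) = cl Z := by
  haveI h1 : Epi (factorThruImage φ ≫ image.ι φ) := by rw [image.fac]; infer_instance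
  haveI h2 : Epi (image.ι φ) := epi_of_epi (factorThruImage φ) (image.ι φ)
  haveI : IsIso (image.ι φ) := isIso_of_mono_of_epi _
  exact cl_iso cl hcl0 hses (asIso (image.ι φ))

lemma mono_of_isZero_src {X Y : C} (f : X ⟶ Y) (h : IsZero X) : Mono f :=
  ⟨fun g g' _ => h.eq_of_tgt g g'⟩

lemma isIso_of_isZero {X Y : C} (f : X ⟶ Y) (hX : IsZero X) (hY : IsZero Y) : IsIso f :=
  ⟨0, hX.eq_of_src _ _, hY.eq_of_src _ _⟩

lemma epi_of_isZero_cokernel {X Y : C} (f : X ⟶ Y) (h : IsZero (cokernel f)) : Epi f :=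
  Abelian.epi_of_cokernel_π_eq_zero f (h.eq_zero_of_tgt _)

variable (d r : Γ' →+ ℝ) (v : Γ' →+ ℤ)

lemma semistable_of_iso (hcl0 : ∀ X : C, IsZero X → cl X = 0)
    (hses : ∀ S : ShortComplex C, S.ShortExact → cl S.X₂ = cl S.X₁ + cl S.X₃)
    {c : ℝ} {X Y : C} (e : X ≅ Y)
    (h : IsSemistableAt cl d r v c X) : IsSemistableAt cl d r v c Y := by
  intro F f hm hnz hni
  haveI := hm
  have hm2 : Mono (f ≫ e.inv) := mono_comp _ _
  have hni2 : ¬ IsIso (f ≫ e.inv) := by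
    intro hiso
    apply hni
    haveI := hiso
    have hf : f = (f ≫ e.inv) ≫ e.hom := by simp
    rw [hf]
    infer_instance
  have key := h F (f ≫ e.inv) hm2 hnz hni2
  rwa [cl_iso cl hcl0 hses e] at key

/-- subobject decomposition along a mono `f : E' ⟶ E` -/
lemma sub_decomp (hses : ∀ S : ShortComplex C, S.ShortExact → cl S.X₂ = cl S.X₁ + cl S.X₃)
    {E' E F : C} (f : E' ⟶ E) [Mono f] (g : F ⟶ E) [Mono g] :
    ∃ (K I : C) (k : K ⟶ E') (i : I ⟶ cokernel f),
      Mono k ∧ Mono i ∧ cl F = cl K + cl I := by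
  set φ : F ⟶ cokernel f := g ≫ cokernel.π f with hφ
  have hcond : (kernel.ι φ ≫ g) ≫ cokernel.π f = 0 := by
    rw [Category.assoc, ← hφ, kernel.condition]
  refine ⟨kernel φ, image φ, Abelian.monoLift f (kernel.ι φ ≫ g) hcond, image.ι φ,
    ?_, inferInstance, cl_kernel_image cl hses φ⟩
  haveI : Mono (Abelian.monoLift f (kernel.ι φ ≫ g) hcond ≫ f) := by
    rw [Abelian.monoLift_comp]
    exact mono_comp _ _
  exact mono_of_mono (Abelian.monoLift f (kernel.ι φ ≫ g) hcond) f

/-- quotient subobject: subobjects of `cokernel f` have class `cl X'' - cl E'`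
with `X''` a subobject of `E`. -/
lemma quot_decomp (hcl0 : ∀ X : C, IsZero X → cl X = 0)
    (hses : ∀ S : ShortComplex C, S.ShortExact → cl S.X₂ = cl S.X₁ + cl S.X₃)
    {E' E G : C} (f : E' ⟶ E) [Mono f] (u : G ⟶ cokernel f) [Mono u] :
    ∃ (X'' : C) (h : X'' ⟶ E), Mono h ∧ cl G = cl X'' - cl E' := by
  set ψ : E ⟶ cokernel u := cokernel.π f ≫ cokernel.π u with hψ
  haveI : Epi ψ := epi_comp _ _
  have h1 : cl E = cl (kernel ψ) + cl (image ψ) := cl_kernel_image cl hses ψ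
  have h2 : cl (image ψ) = cl (cokernel u) := cl_image_of_epi cl hcl0 hses ψ
  have h3 : cl (cokernel f) = cl G + cl (cokernel u) := cl_cokernel cl hses u
  have h4 : cl E = cl E' + cl (cokernel f) := cl_cokernel cl hses f
  refine ⟨kernel ψ, kernel.ι ψ, inferInstance, ?_⟩
  rw [h2] at h1
  rw [h3] at h4
  rw [h1] at h4
  abel_nf
  abel_nf at h4
  linear_combination (norm := abel_nf) - h4

end Cat
end HNAux
open HNAux ZeroObject

/-- A nonzero object `E` with `v(cl E) = 1` is `c`-semistable iff it has a subobject
`E' ⊊ E` with `v(cl E') = 0` such that for all small `ε > 0` the chain `0 ⊆ E' ⊆ E` is the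
`(c−ε)`-HN filtration of `E`, and if `E' ≠ 0` then `E'` and `E` have equal `c`-slopes. -/
theorem stmt_5 {C : Type*} [Category C] [Abelian C] {Γ : Type*} [AddCommGroup Γ]
    (cl : C → Γ) (d r : Γ →+ ℝ) (v : Γ →+ ℤ)
    (hcl0 : ∀ X : C, IsZero X → cl X = 0)
    (hses : ∀ S : ShortComplex C, S.ShortExact → cl S.X₂ = cl S.X₁ + cl S.X₃)
    (hpos : ∀ X : C, ¬ IsZero X →
      0 ≤ r (cl X) ∧ 0 ≤ v (cl X) ∧ (r (cl X) = 0 → 0 < d (cl X) ∧ v (cl X) = 0))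
    (E : C) (hE : ¬ IsZero E) (hvE : v (cl E) = 1) (c : ℝ)
    (hfin : {g : Γ | ∃ (F : C) (f : F ⟶ E), Mono f ∧ cl F = g}.Finite)
    (hHN : ∀ (c' : ℝ) (X : C), ¬ IsZero X → Nonempty (HNFiltration cl d r v c' X)) :
    IsSemistableAt cl d r v c E ↔
      ∃ (E' : C) (f : E' ⟶ E), Mono f ∧ ¬ IsIso f ∧ v (cl E') = 0 ∧
        (∃ δ > (0 : ℝ), ∀ ε : ℝ, 0 < ε → ε < δ →
          ((IsZero E' ∧ IsSemistableAt cl d r v (c - ε) E) ∨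
           (¬ IsZero E' ∧ IsSemistableAt cl d r v (c - ε) E' ∧
             IsSemistableAt cl d r v (c - ε) (cokernel f) ∧
             slopeLT d r v (c - ε) (cl (cokernel f)) (cl E')))) ∧
        (¬ IsZero E' →
          slopeLE d r v c (cl E') (cl E) ∧ slopeLE d r v c (cl E) (cl E')) := by
  classical
  have hrE : 0 < r (cl E) := by
    obtain ⟨h1, h2, h3⟩ := hpos E hE
    rcases lt_or_eq_of_le h1 with h | h
    · exact h
    · exact absurd (h3 h.symm).2 (by rw [hvE]; omega)
  constructor
  · -- Forward direction
    intro hss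
    have hTfin : ((fun p : Γ × Γ => p.1 - p.2) ''
        (({g : Γ | ∃ (F : C) (f : F ⟶ E), Mono f ∧ cl F = g}) ×ˢ
         ({g : Γ | ∃ (F : C) (f : F ⟶ E), Mono f ∧ cl F = g}))).Finite :=
      (hfin.prod hfin).image _
    obtain ⟨ε₀, hε₀, heps⟩ := exists_eps0 d r v _ hTfin c
    obtain ⟨FL⟩ := hHN (c - ε₀/2) E hE
    obtain ⟨n, hnpos, obj, hz0, hlast, map, hmono, hniso, hqsst, hdesc⟩ := FL
    subst hlast
    set S : Set Γ :=
      {g : Γ | ∃ (F : C) (f : F ⟶ obj (Fin.last n)), Mono f ∧ cl F = g} with hSdef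
    set T : Set Γ := (fun p : Γ × Γ => p.1 - p.2) '' (S ×ˢ S) with hTdef
    have h0S : (0:Γ) ∈ S :=
      ⟨0, 0, mono_of_isZero_src _ (isZero_zero C), hcl0 _ (isZero_zero C)⟩
    have hST : S ⊆ T := fun x hx => ⟨(x, 0), ⟨hx, h0S⟩, by simp⟩
    set X : ℕ → Γ := fun i => if h : i < n + 1 then cl (obj ⟨i, h⟩) else 0 with hXdef
    set Q : ℕ → Γ := fun i => if h : i < n then cl (cokernel (map ⟨i, h⟩)) else 0 with hQdef
    have hXi_eq : ∀ i (h : i < n + 1), X i = cl (obj ⟨i, h⟩) := by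
      intro i h; simp only [hXdef]; rw [dif_pos h]
    have hQi_eq : ∀ i (h : i < n), Q i = cl (cokernel (map ⟨i, h⟩)) := by
      intro i h; simp only [hQdef]; rw [dif_pos h]
    have hz0' : IsZero (obj ⟨0, Nat.succ_pos n⟩) := by
      convert hz0 using 2
      exact Fin.ext (by simp)
    have hX0 : X 0 = 0 := by rw [hXi_eq 0 (by omega)]; exact hcl0 _ hz0'
    have hXn : X n = cl (obj (Fin.last n)) := by
      rw [hXi_eq n (by omega)]
      exact congrArg cl (congrArg obj (Fin.ext rfl))
    have hstep : ∀ i (h : i < n), X (i+1) = X i + Q i := by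
      intro i h
      haveI := hmono ⟨i, h⟩
      have hc := cl_cokernel cl hses (map ⟨i, h⟩)
      rw [hXi_eq (i+1) (by omega), hXi_eq i (by omega), hQi_eq i h]
      exact hc
    have hQgood : ∀ i (h : i < n), good d r v (Q i) := by
      intro i h
      have hnz : ¬ IsZero (cokernel (map ⟨i, h⟩)) := by
        intro hz
        haveI := hmono ⟨i, h⟩
        haveI : Epi (map ⟨i, h⟩) := epi_of_isZero_cokernel _ hz
        exact hniso ⟨i, h⟩ (isIso_of_mono_of_epi _)
      rw [hQi_eq i h]
      exact hpos _ hnz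
    have hdesc' : ∀ i (h : i + 1 < n),
        cross d r v (c - ε₀/2) (Q (i+1)) (Q i) < 0 := by
      intro i h
      have h0 := (slopeLT_iff d r v).mp (hdesc i h)
      rw [hQi_eq (i+1) h, hQi_eq i (by omega)]
      exact h0
    have hchain : ∀ i j, i < j → j < n →
        cross d r v (c - ε₀/2) (Q j) (Q i) < 0 := by
      intro i j hij hjn
      have haux : ∀ k, i + 1 + k < n → cross d r v (c - ε₀/2) (Q (i+1+k)) (Q i) < 0 := by
        intro k
        induction k with
        | zero => intro hk; exact hdesc' i (by omega)
        | succ k ih =>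
          intro hk
          have h1 := ih (by omega)
          have h2 := hdesc' (i+1+k) (by omega)
          have hg1 := hQgood (i+1+k+1) (by omega)
          have hg2 := hQgood (i+1+k) (by omega)
          have hg3 := hQgood i (by omega)
          exact lt_trans' d r v hg1 hg2 hg3.1 h2 h1
      have := haux (j - i - 1) (by omega)
      rwa [show i+1+(j-i-1) = j by omega] at this
    have hM : ∀ k i (hin : i + k = n),
        ∃ g : obj ⟨i, Nat.lt_succ_of_le (Nat.le.intro hin)⟩ ⟶ obj (Fin.last n),
          Mono g ∧ (0 < k → ¬ IsIso g) := by
      intro k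
      induction k with
      | zero =>
        intro i hin
        have hi : i = n := by omega
        subst hi
        exact ⟨𝟙 _, inferInstance, fun h0 => absurd h0 (lt_irrefl 0)⟩
      | succ k ih =>
        intro i hin
        have hi1 : i < n := by omega
        obtain ⟨g', hg', hni'⟩ := ih (i+1) (by omega)
        haveI := hg'
        haveI := hmono ⟨i, hi1⟩
        refine ⟨map ⟨i, hi1⟩ ≫ g', mono_comp _ _, fun _ hiso => ?_⟩
        haveI := hiso
        haveI : Epi g' := epi_of_epi (map ⟨i, hi1⟩) g'
        haveI : IsIso g' := isIso_of_mono_of_epi g'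
        apply hniso ⟨i, hi1⟩
        have heq2 : map ⟨i, hi1⟩ = (map ⟨i, hi1⟩ ≫ g') ≫ inv g' := by simp
        rw [heq2]
        infer_instance
    have hnzO : ∀ i, 0 < i → ∀ h : i < n + 1, ¬ IsZero (obj ⟨i, h⟩) := by
      intro i
      induction i with
      | zero => intro h0; exact absurd h0 (lt_irrefl 0)
      | succ i ih =>
        intro _ h hz
        rcases Nat.eq_zero_or_pos i with rfl | hi
        · exact hniso ⟨0, by omega⟩ (isIso_of_isZero _ hz0' hz)
        · have hi' : i < n := by omega
          have hi'' : i < n + 1 := by omega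
          haveI := hmono ⟨i, hi'⟩
          exact ih hi hi'' (IsZero.of_mono (map ⟨i, hi'⟩) hz)
    have hXS : ∀ i, i ≤ n → X i ∈ S := by
      intro i h
      have hi' : i < n + 1 := by omega
      obtain ⟨g, hg, -⟩ := hM (n - i) i (by omega)
      exact ⟨obj ⟨i, hi'⟩, g, hg, (hXi_eq i hi').symm⟩
    have hXT : ∀ i, i ≤ n → X i ∈ T := fun i h => hST (hXS i h)
    have hQT : ∀ i (h : i < n), Q i ∈ T := by
      intro i h
      refine ⟨(X (i+1), X i), ⟨hXS _ (by omega), hXS _ (by omega)⟩, ?_⟩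
      show X (i+1) - X i = Q i
      rw [hstep i h]; abel
    have hled : ∀ i, 0 < i → i < n → cross d r v c (X i) (X n) ≤ 0 := by
      intro i h0 hn'
      obtain ⟨g, hg, hni⟩ := hM (n - i) i (by omega)
      have h1 := hss _ g hg (hnzO i h0 (by omega)) (hni (by omega))
      rw [slopeLE_iff d r v] at h1
      rw [hXi_eq i (by omega), hXn]
      exact h1
    have hQX : ∀ i, 0 < i → ∀ m, i ≤ m → m < n →
        cross d r v (c - ε₀/2) (Q m) (X i) < 0 := by
      intro i
      induction i with
      | zero => intro h0; exact absurd h0 (lt_irrefl 0)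
      | succ i ih =>
        intro _ m him hmn
        rcases Nat.eq_zero_or_pos i with rfl | hi
        · have hX1 : X 1 = Q 0 := by
            have := hstep 0 (by omega)
            rw [hX0, zero_add] at this
            simpa using this
          rw [hX1]
          exact hchain 0 m (by omega) hmn
        · rw [hstep i (by omega), cross_add_right]
          have h1 := ih hi m (by omega) hmn
          have h2 := hchain i m (by omega) hmn
          linarith
    have hgt : ∀ i, 0 < i → i < n → cross d r v (c - ε₀/2) (X n) (X i) < 0 := by
      intro i h0 hn'
      have haux : ∀ k, 0 < k → i + k ≤ n → cross d r v (c - ε₀/2) (X (i+k)) (X i) < 0 := by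
        intro k
        induction k with
        | zero => intro h0'; exact absurd h0' (lt_irrefl 0)
        | succ k ih =>
          intro _ h
          have hs := hstep (i+k) (by omega)
          rw [show i + (k+1) = i + k + 1 by omega, hs, cross_add_left]
          have h2 := hQX i h0 (i+k) (by omega) (by omega)
          rcases Nat.eq_zero_or_pos k with rfl | hk
          · rw [show i + 0 = i by omega] at h2 ⊢
            rw [cross_self']
            linarith
          · have h1 := ih hk (by omega)
            linarith
      have := haux (n - i) (by omega) (by omega)
      rwa [show i + (n-i) = n by omega] at this
    have heqc : ∀ i, 0 < i → i < n → cross d r v c (X i) (X n) = 0 := by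
      intro i h0 hn'
      have h1 := hled i h0 hn'
      have h2 := (heps _ (hXT n le_rfl) _ (hXT i (le_of_lt hn'))
        (ε₀/2) (by linarith) (by linarith)).2.1 (hgt i h0 hn')
      have h3 := cross_neg' d r v c (X i) (X n)
      linarith
    have hrXn : 0 < r (X n) := by rw [hXn]; exact hrE
    have hQE0 : ∀ i, i < n → cross d r v c (Q i) (X n) = 0 := by
      intro i h
      have hx : cross d r v c (X (i+1)) (X n) = 0 := by
        rcases eq_or_lt_of_le (show i+1 ≤ n by omega) with he | hl
        · rw [he, cross_self']
        · exact heqc (i+1) (by omega) hl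
      rw [hstep i h, cross_add_left] at hx
      have hXiE : cross d r v c (X i) (X n) = 0 := by
        rcases Nat.eq_zero_or_pos i with rfl | hi
        · rw [hX0, cross_zero_left]
        · exact heqc i hi (by omega)
      linarith
    have hQQ0 : ∀ i j, i < n → j < n → cross d r v c (Q i) (Q j) = 0 :=
      fun i j hi hj => cross_eq_zero_trans d r v hrXn (hQE0 i hi) (hQE0 j hj)
    have hvQ : ∀ i, i + 1 < n → 1 ≤ v (Q (i+1)) := by
      intro i h
      have h1 := hdesc' i h
      have h2 := hQQ0 (i+1) i h (by omega)
      rw [cross_sub_eps, h2, zero_sub] at h1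
      have hB : 0 < (v (Q (i+1)) : ℝ) * r (Q i) - (v (Q i) : ℝ) * r (Q (i+1)) := by
        nlinarith
      by_contra hv
      push_neg at hv
      have hg1 := hQgood (i+1) h
      have hg2 := hQgood i (by omega)
      have hv0 : v (Q (i+1)) = 0 := le_antisymm (by omega) hg1.2.1
      rw [hv0] at hB
      push_cast at hB
      have hr1 : (0:ℝ) ≤ (v (Q i) : ℝ) := by exact_mod_cast hg2.2.1
      nlinarith [hg1.1]
    have hvXn : v (X n) = 1 := by rw [hXn]; exact hvE
    have hvmono : ∀ k i, i + k ≤ n → v (X i) ≤ v (X (i+k)) := by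
      intro k
      induction k with
      | zero => intro i h; rw [show i + 0 = i by omega]
      | succ k ih =>
        intro i h
        have h1 := ih i (by omega)
        have h2 : v (X (i+k)) ≤ v (X (i+k+1)) := by
          rw [hstep (i+k) (by omega), map_add]
          have := (hQgood (i+k) (by omega)).2.1
          omega
        rw [show i + (k+1) = i + k + 1 by omega]
        omega
    have hn2 : n ≤ 2 := by
      by_contra hcon
      push_neg at hcon
      have h1 : 1 ≤ v (Q 1) := by simpa using hvQ 0 (by omega)
      have h2 : 1 ≤ v (Q 2) := by simpa using hvQ 1 (by omega)
      have e1 : X 1 = X 0 + Q 0 := by simpa using hstep 0 (by omega)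
      have e2 : X 2 = X 1 + Q 1 := by simpa using hstep 1 (by omega)
      have e3 : X 3 = X 2 + Q 2 := by simpa using hstep 2 (by omega)
      have hg0 := (hQgood 0 (by omega)).2.1
      have hm3 : v (X 3) ≤ v (X n) := by
        have := hvmono (n - 3) 3 (by omega)
        rwa [show 3 + (n-3) = n by omega] at this
      have hX0v : v (X 0) = 0 := by rw [hX0, map_zero]
      rw [e3, map_add, e2, map_add, e1, map_add] at hm3
      omega
    have hnn : n = 1 ∨ n = 2 := by omega
    rcases hnn with rfl | rfl
    · -- n = 1 : E is (c-ε)-semistable for small ε; take E' = 0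
      have h01 : (0:ℕ) < 1 := one_pos
      have h0eq : map ⟨0, h01⟩ = 0 := hz0'.eq_of_src _ _
      have hsstE : IsSemistableAt cl d r v (c - ε₀/2) (obj (Fin.last 1)) :=
        semistable_of_iso cl d r v hcl0 hses
          ((cokernelIsoOfEq h0eq ≪≫ cokernelZeroIsoTarget :
            cokernel (map ⟨0, h01⟩) ≅ obj (Fin.last 1))) (hqsst ⟨0, h01⟩)
      refine ⟨0, 0, mono_of_isZero_src _ (isZero_zero C), ?_, ?_, ⟨ε₀, hε₀, ?_⟩,
        fun h => absurd (isZero_zero C) h⟩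
      · intro h
        haveI := h
        exact hE (IsZero.of_iso (isZero_zero C)
          (asIso (0 : (0:C) ⟶ obj (Fin.last 1))).symm)
      · rw [hcl0 _ (isZero_zero C), map_zero]
      · intro ε h1 h2
        left
        refine ⟨isZero_zero C, ?_⟩
        intro F g hm hnz hni
        have hFT : cl F ∈ T := hST ⟨F, g, hm, rfl⟩
        have hET : cl (obj (Fin.last 1)) ∈ T := by
          have := hXT 1 le_rfl
          rwa [hXn] at this
        have h0 := hsstE F g hm hnz hni
        rw [slopeLE_iff d r v] at h0 ⊢
        exact ((heps _ hFT _ hET ε h1 h2).2.2.1).mpr h0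
    · -- n = 2 : E' = obj 1
      have h1vQ : 1 ≤ v (Q 1) := by simpa using hvQ 0 (by omega)
      have e1 : X 1 = X 0 + Q 0 := by simpa using hstep 0 (by omega)
      have e2 : X 2 = X 1 + Q 1 := by simpa using hstep 1 (by omega)
      have hg0 := (hQgood 0 (by omega)).2.1
      have hvX1 : v (X 1) = 0 := by
        have hs : v (X 2) = 1 := hvXn
        rw [e2, map_add] at hs
        rw [e1, map_add, hX0, map_zero]
        rw [e1, map_add, hX0, map_zero] at hs
        omega
      have h02 : (0:ℕ) < 2 := by omega
      have h13 : (1:ℕ) < 2 + 1 := by omega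
      have h12 : (1:ℕ) < 2 := by omega
      have h0eq : map ⟨0, h02⟩ = 0 := hz0'.eq_of_src _ _
      have hsstE' : IsSemistableAt cl d r v (c - ε₀/2) (obj ⟨1, h13⟩) :=
        semistable_of_iso cl d r v hcl0 hses
          ((cokernelIsoOfEq h0eq ≪≫ cokernelZeroIsoTarget :
            cokernel (map ⟨0, h02⟩) ≅ obj ⟨1, h13⟩)) (hqsst ⟨0, h02⟩)
      have hE'T : cl (obj ⟨1, h13⟩) ∈ T := by
        have := hXT 1 (by omega)
        rwa [hXi_eq 1 h13] at this
      have hE'S : cl (obj ⟨1, h13⟩) ∈ S := by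
        have := hXS 1 (by omega)
        rwa [hXi_eq 1 h13] at this
      have hQ1T : cl (cokernel (map ⟨1, h12⟩)) ∈ T := by
        have := hQT 1 (by omega)
        rwa [hQi_eq 1 h12] at this
      refine ⟨obj ⟨1, h13⟩, map ⟨1, h12⟩, hmono _, hniso _, ?_, ⟨ε₀, hε₀, ?_⟩, ?_⟩
      · have := hvX1
        rwa [hXi_eq 1 h13] at this
      · intro ε h1 h2
        right
        refine ⟨hnzO 1 one_pos h13, ?_, ?_, ?_⟩
        · -- E' is (c-ε)-semistable
          intro F g hm hnz hni
          haveI := hm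
          haveI := hmono (⟨1, h12⟩ : Fin 2)
          have hFT : cl F ∈ T := hST ⟨F, g ≫ map ⟨1, h12⟩, mono_comp _ _, rfl⟩
          have h0 := hsstE' F g hm hnz hni
          rw [slopeLE_iff d r v] at h0 ⊢
          exact ((heps _ hFT _ hE'T ε h1 h2).2.2.1).mpr h0
        · -- cokernel f is (c-ε)-semistable
          intro G u hm hnz hni
          haveI := hm
          haveI := hmono (⟨1, h12⟩ : Fin 2)
          obtain ⟨X'', h'', hm'', hcl''⟩ := quot_decomp cl hcl0 hses (map ⟨1, h12⟩) u
          have hGT : cl G ∈ T := by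
            rw [hcl'']
            exact ⟨(cl X'', cl (obj ⟨1, h13⟩)), ⟨⟨X'', h'', hm'', rfl⟩, hE'S⟩, rfl⟩
          have h0 := hqsst ⟨1, h12⟩ G u hm hnz hni
          rw [slopeLE_iff d r v] at h0 ⊢
          exact ((heps _ hGT _ hQ1T ε h1 h2).2.2.1).mpr h0
        · -- strict slope comparison
          rw [slopeLT_iff d r v]
          have hX1Q0 : X 1 = Q 0 := by
            rw [e1, hX0, zero_add]
          have h0 : cross d r v (c - ε₀/2) (Q 1) (X 1) < 0 := by
            rw [hX1Q0]
            simpa using hdesc' 0 (by omega)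
          have h3 := ((heps _ hQ1T _ hE'T ε h1 h2).2.2.2).mpr (by
            rwa [hQi_eq 1 h12, hXi_eq 1 h13] at h0)
          exact h3
      · intro _
        constructor
        · rw [slopeLE_iff d r v]
          have h1 := hled 1 (by omega) (by omega)
          rwa [hXi_eq 1 h13, hXn] at h1
        · rw [slopeLE_iff d r v]
          have h1 := heqc 1 (by omega) (by omega)
          have h2 : cross d r v c (X 2) (X 1) ≤ 0 := by
            rw [cross_neg' d r v]
            linarith
          rwa [hXi_eq 1 h13, hXn] at h2
  · -- Backward direction
    rintro ⟨E', f, hmf, hnif, hvE', ⟨δ, hδ, hfilt⟩, heq⟩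
    intro F g hmg hnzF hnig
    rw [slopeLE_iff d r v]
    haveI := hmf
    haveI := hmg
    by_cases hzE' : IsZero E'
    · refine le_of_forall_eps hδ
        (B := ((v (cl F) : ℝ) * r (cl E) - (v (cl E) : ℝ) * r (cl F))) ?_
      intro ε h1 h2
      have hs := ((hfilt ε h1 h2).resolve_right (fun h => h.1 hzE')).2
      have h0 := hs F g hmg hnzF hnig
      rw [slopeLE_iff d r v] at h0
      rw [← cross_sub_eps]
      exact h0
    · have hQnz : ¬ IsZero (cokernel f) := by
        intro h
        haveI : Epi f := epi_of_isZero_cokernel f h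
        exact hnif (isIso_of_mono_of_epi f)
      have hgE' := hpos E' hzE'
      have hgQ := hpos _ hQnz
      have hrQpos : 0 < r (cl (cokernel f)) := by
        have hmid := (hfilt (δ/2) (by linarith) (by linarith)).resolve_left
          (fun h => hzE' h.1)
        have hlt := (slopeLT_iff d r v).mp hmid.2.2.2
        exact r_pos_of_lt d r v hgQ hgE'.1 hlt
      obtain ⟨K, I, k, i, hmk, hmi, hclF⟩ := sub_decomp cl hses f g
      have key : ∀ ε : ℝ, 0 < ε → ε < δ →
          cross d r v (c - ε) (cl F) (cl E') ≤ 0 := by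
        intro ε h1 h2
        obtain ⟨-, hssE', hssQ, hLT⟩ := (hfilt ε h1 h2).resolve_left
          (fun h => hzE' h.1)
        rw [slopeLT_iff d r v] at hLT
        have hK : cross d r v (c - ε) (cl K) (cl E') ≤ 0 := by
          by_cases hzK : IsZero K
          · rw [hcl0 _ hzK, cross_zero_left]
          · by_cases hiK : IsIso k
            · rw [cl_iso cl hcl0 hses (asIso k), cross_self']
            · have h0 := hssE' K k hmk hzK hiK
              rwa [slopeLE_iff d r v] at h0
        have hI : cross d r v (c - ε) (cl I) (cl E') ≤ 0 := by
          by_cases hzI : IsZero I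
          · rw [hcl0 _ hzI, cross_zero_left]
          · have hIQ : cross d r v (c - ε) (cl I) (cl (cokernel f)) ≤ 0 := by
              by_cases hiI : IsIso i
              · rw [cl_iso cl hcl0 hses (asIso i), cross_self']
              · have h0 := hssQ I i hmi hzI hiI
                rwa [slopeLE_iff d r v] at h0
            exact le_lt_trans' d r v (hpos I hzI).1 hrQpos hgE'.1 hIQ hLT
        rw [hclF, cross_add_left]
        linarith
      have hFE' : cross d r v c (cl F) (cl E') ≤ 0 := by
        refine le_of_forall_eps hδ
          (B := ((v (cl F) : ℝ) * r (cl E') - (v (cl E') : ℝ) * r (cl F))) ?_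
        intro ε h1 h2
        rw [← cross_sub_eps]
        exact key ε h1 h2
      obtain ⟨hle1, hle2⟩ := heq hzE'
      rw [slopeLE_iff d r v] at hle1
      have hrE'pos : 0 < r (cl E') := by
        rcases lt_or_eq_of_le hgE'.1 with h | h
        · exact h
        · exfalso
          obtain ⟨hd, hv0'⟩ := hgE'.2.2 h.symm
          simp only [cross, ← h, hv0'] at hle1
          push_cast at hle1
          nlinarith
      exact le_le_trans' d r v (hpos F hnzF).1 hrE'pos (le_of_lt hrE) hFE' hle1
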